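/- For a single Gaussian, the total variation distance between N_ℝ(0,(1-ε)²σ²) and N_ℝ(0,σ²) is at most ε/(1-ε) ≤ 2ε for ε ∈ (0, 1/2]. -/

import Mathlib

open MeasureTheory ProbabilityTheory Real
open scoped NNReal

lemma gaussian_pdf_ratio_bound (σ : ℝ≥0) (hσ : 0 < σ) (ε : ℝ) (hε0 : 0 < ε)
    (hε1 : ε < 1) (x : ℝ) :
    gaussianPDFReal 0 (((1 - ε).toNNReal) ^ 2 * σ ^ 2) x ≤
      (1 - ε)⁻¹ * gaussianPDFReal 0 (σ ^ 2) x := by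
  have h1 : (0:ℝ) < 1 - ε := by linarith
  have hco : (((1 - ε).toNNReal : ℝ≥0) : ℝ) = 1 - ε := Real.coe_toNNReal _ h1.le
  have hσ' : (0:ℝ) < (σ : ℝ) := hσ
  simp only [gaussianPDFReal, sub_zero]
  have hv1 : ((((1 - ε).toNNReal) ^ 2 * σ ^ 2 : ℝ≥0) : ℝ) = (1 - ε) ^ 2 * (σ:ℝ) ^ 2 := by
    push_cast [hco]; ring
  rw [hv1]
  have hsqrt : √(2 * π * ((1 - ε) ^ 2 * (σ:ℝ) ^ 2)) = (1 - ε) * √(2 * π * (σ:ℝ) ^ 2) := by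
    rw [show 2 * π * ((1 - ε) ^ 2 * (σ:ℝ) ^ 2) = (1 - ε)^2 * (2 * π * (σ:ℝ)^2) by ring,
      Real.sqrt_mul (sq_nonneg _), Real.sqrt_sq h1.le]
  rw [hsqrt, mul_inv]
  have hπσ : (0:ℝ) < √(2 * π * (σ:ℝ) ^ 2) := by
    apply Real.sqrt_pos.mpr; positivity
  rw [mul_assoc]
  apply mul_le_mul_of_nonneg_left _ (by positivity)
  apply mul_le_mul_of_nonneg_left _ (by positivity)
  apply Real.exp_le_exp.mpr
  rw [div_le_div_iff₀ (by push_cast; positivity) (by push_cast; positivity)]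
  have hx : 0 ≤ x ^ 2 := sq_nonneg x
  push_cast
  nlinarith [mul_nonneg (mul_nonneg hx (sq_nonneg (σ:ℝ))) (mul_nonneg hε0.le (by linarith : (0:ℝ) ≤ 2 - ε))]

lemma gaussian_one_side (σ : ℝ≥0) (hσ : 0 < σ) (ε : ℝ) (hε0 : 0 < ε)
    (hε1 : ε < 1) (B : Set ℝ) (hB : MeasurableSet B) :
    ((gaussianReal 0 (((1 - ε).toNNReal) ^ 2 * σ ^ 2)) B).toReal -
        ((gaussianReal 0 (σ ^ 2)) B).toReal ≤ ε / (1 - ε) := by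
  have h1 : (0:ℝ) < 1 - ε := by linarith
  have hv1 : (((1 - ε).toNNReal) ^ 2 * σ ^ 2 : ℝ≥0) ≠ 0 := by
    apply mul_ne_zero <;> apply pow_ne_zero
    · simp only [ne_eq, Real.toNNReal_eq_zero, not_le]; exact h1
    · exact hσ.ne'
  have hv2 : (σ ^ 2 : ℝ≥0) ≠ 0 := pow_ne_zero _ hσ.ne'
  rw [gaussianReal_apply_eq_integral 0 hv1 B, gaussianReal_apply_eq_integral 0 hv2 B,
    ENNReal.toReal_ofReal (setIntegral_nonneg hB fun x _ => gaussianPDFReal_nonneg _ _ x),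
    ENNReal.toReal_ofReal (setIntegral_nonneg hB fun x _ => gaussianPDFReal_nonneg _ _ x)]
  have hint1 := (integrable_gaussianPDFReal 0 (((1 - ε).toNNReal) ^ 2 * σ ^ 2)).restrict (s := B)
  have hint2 := (integrable_gaussianPDFReal 0 (σ ^ 2)).restrict (s := B)
  have key : ∫ x in B, gaussianPDFReal 0 (((1 - ε).toNNReal) ^ 2 * σ ^ 2) x ≤
      (1 - ε)⁻¹ * ∫ x in B, gaussianPDFReal 0 (σ ^ 2) x := by
    rw [← integral_const_mul]
    exact integral_mono hint1 (hint2.const_mul _)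
      (fun x => gaussian_pdf_ratio_bound σ hσ ε hε0 hε1 x)
  have hQle : ∫ x in B, gaussianPDFReal 0 (σ ^ 2) x ≤ 1 := by
    calc ∫ x in B, gaussianPDFReal 0 (σ ^ 2) x ≤ ∫ x, gaussianPDFReal 0 (σ ^ 2) x :=
          setIntegral_le_integral (integrable_gaussianPDFReal 0 (σ ^ 2))
            (ae_of_all _ fun x => gaussianPDFReal_nonneg _ _ x)
      _ = 1 := integral_gaussianPDFReal_eq_one 0 hv2
  have hQnn : 0 ≤ ∫ x in B, gaussianPDFReal 0 (σ ^ 2) x :=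
    setIntegral_nonneg hB fun x _ => gaussianPDFReal_nonneg _ _ x
  have hc : (1 - ε)⁻¹ - 1 = ε / (1 - ε) := by field_simp; ring
  have h2 : (1:ℝ) ≤ (1 - ε)⁻¹ := by
    nlinarith [mul_inv_cancel₀ h1.ne', inv_nonneg.mpr h1.le]
  nlinarith [inv_nonneg.mpr h1.le]

/-- The total variation distance between `N(0, (1-ε)²σ²)` and `N(0, σ²)` is at most
`ε/(1-ε)`, which is itself at most `2ε`, for `ε ∈ (0, 1/2]`. -/
theorem tv_gaussian_shrunk_variance_le (σ : ℝ≥0) (hσ : 0 < σ) (ε : ℝ)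
    (hε : ε ∈ Set.Ioc (0 : ℝ) (1/2))
    (A : Set ℝ) (hA : MeasurableSet A) :
    |((gaussianReal 0 (((1 - ε).toNNReal) ^ 2 * σ ^ 2)) A).toReal -
        ((gaussianReal 0 (σ ^ 2)) A).toReal| ≤ ε / (1 - ε) ∧
      ε / (1 - ε) ≤ 2 * ε := by
  obtain ⟨hε0, hε2⟩ := hε
  have hε1 : ε < 1 := by linarith
  have h1 : (0:ℝ) < 1 - ε := by linarith
  constructor
  · rw [abs_sub_le_iff]
    refine ⟨gaussian_one_side σ hσ ε hε0 hε1 A hA, ?_⟩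
    have h := gaussian_one_side σ hσ ε hε0 hε1 Aᶜ hA.compl
    have e1 : ∀ (v : ℝ≥0), v ≠ 0 → ((gaussianReal 0 v) Aᶜ).toReal
        = 1 - ((gaussianReal 0 v) A).toReal := by
      intro v hv
      have := measure_compl (μ := gaussianReal 0 v) hA (measure_ne_top _ _)
      rw [this, measure_univ, ENNReal.toReal_sub_of_le (prob_le_one) (by simp)]
      simp
    have hv1 : (((1 - ε).toNNReal) ^ 2 * σ ^ 2 : ℝ≥0) ≠ 0 := by
      apply mul_ne_zero <;> apply pow_ne_zero
      · simp only [ne_eq, Real.toNNReal_eq_zero, not_le]; exact h1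
      · exact hσ.ne'
    have hv2 : (σ ^ 2 : ℝ≥0) ≠ 0 := pow_ne_zero _ hσ.ne'
    rw [e1 _ hv1, e1 _ hv2] at h
    linarith
  · rw [div_le_iff₀ h1]
    nlinarith
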